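/- Let β > 1 and t > 0. Let σ(t,β) ∈ (0,1) be implicitly defined by p(t)·σ/√(1-σ²) + q(t)·σ/√(β²-σ²) = 1, where q(t) = ⌊t+1⌋/2 if ⌊t⌋ is odd and q(t) = t - ⌊t⌋/2 if ⌊t⌋ is even, and p(t) = t+1-q(t). Then σ(t,β) > 1/√((1+t)² + 1). -/

import Mathlib

open Real

noncomputable def qth (t : ℝ) : ℝ :=
  if Odd ⌊t⌋ then (⌊t + 1⌋ : ℝ) / 2 else t - (⌊t⌋ : ℝ) / 2

noncomputable def pth (t : ℝ) : ℝ := t + 1 - qth t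

lemma qth_pos {t : ℝ} (ht : 0 < t) : 0 < qth t := by
  unfold qth
  split_ifs with h
  · have h1 : 1 ≤ ⌊t⌋ := by
      rcases h with ⟨k, hk⟩
      have : 0 ≤ ⌊t⌋ := Int.le_floor.2 (by exact_mod_cast ht.le)
      omega
    have : (2:ℤ) ≤ ⌊t + 1⌋ := by
      have h2 : ⌊t + 1⌋ = ⌊t⌋ + 1 := by
        rw [← Int.floor_add_intCast t 1]; norm_num
      omega
    have : (2:ℝ) ≤ (⌊t + 1⌋ : ℝ) := by exact_mod_cast this
    linarith
  · have hf : (⌊t⌋ : ℝ) ≤ t := Int.floor_le t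
    rcases lt_or_ge (⌊t⌋ : ℤ) 1 with h1 | h1
    · have : (⌊t⌋ : ℝ) ≤ 0 := by exact_mod_cast (by omega : ⌊t⌋ ≤ 0)
      linarith
    · have h2 : ⌊t⌋ ≠ 1 := by
        intro he; exact h (he ▸ ⟨0, by ring⟩)
      have : (2:ℤ) ≤ ⌊t⌋ := by omega
      have h3 : (2:ℝ) ≤ (⌊t⌋ : ℝ) := by exact_mod_cast this
      nlinarith

lemma mono_aux {a b : ℝ} (ha : 0 < a) (hab : a ≤ b) (hb : b < 1) :
    a / Real.sqrt (1 - a ^ 2) ≤ b / Real.sqrt (1 - b ^ 2) := by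
  have ha1 : a < 1 := lt_of_le_of_lt hab hb
  have hpa : 0 < Real.sqrt (1 - a ^ 2) := Real.sqrt_pos.2 (by nlinarith)
  have hpb : 0 < Real.sqrt (1 - b ^ 2) := Real.sqrt_pos.2 (by nlinarith)
  rw [div_le_div_iff₀ hpa hpb]
  have hsq : Real.sqrt (1 - b ^ 2) ≤ Real.sqrt (1 - a ^ 2) :=
    Real.sqrt_le_sqrt (by nlinarith)
  exact mul_le_mul hab hsq hpb.le (ha.trans_le hab).le

theorem stmt_3 (β t : ℝ) (hβ : 1 < β) (ht : 0 < t) (σ : ℝ)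
    (hrange : σ ∈ Set.Ioo (0 : ℝ) 1)
    (heq : pth t * σ / Real.sqrt (1 - σ ^ 2)
        + qth t * σ / Real.sqrt (β ^ 2 - σ ^ 2) = 1) :
    σ > 1 / Real.sqrt ((1 + t) ^ 2 + 1) := by
  obtain ⟨hσ0, hσ1⟩ := hrange
  have hq := qth_pos ht
  have hs1 : 0 < Real.sqrt (1 - σ ^ 2) := Real.sqrt_pos.2 (by nlinarith)
  have hsβ : 0 < Real.sqrt (β ^ 2 - σ ^ 2) := Real.sqrt_pos.2 (by nlinarith)
  have hlt : Real.sqrt (1 - σ ^ 2) < Real.sqrt (β ^ 2 - σ ^ 2) := by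
    apply Real.sqrt_lt_sqrt (by nlinarith)
    nlinarith
  -- second term strictly smaller than with denominator sqrt(1-σ²)
  have hterm : qth t * σ / Real.sqrt (β ^ 2 - σ ^ 2)
      < qth t * σ / Real.sqrt (1 - σ ^ 2) := by
    apply div_lt_div_of_pos_left (by positivity) hs1 hlt
  have hbig : 1 < (t + 1) * σ / Real.sqrt (1 - σ ^ 2) := by
    have : (t + 1) * σ / Real.sqrt (1 - σ ^ 2)
        = pth t * σ / Real.sqrt (1 - σ ^ 2) + qth t * σ / Real.sqrt (1 - σ ^ 2) := by
      unfold pth; ring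
    rw [this]
    linarith [heq, hterm]
  -- value at σ₀
  set A := (1 + t) ^ 2 + 1 with hA
  have hApos : (0:ℝ) < A := by positivity
  have hsA : 0 < Real.sqrt A := Real.sqrt_pos.2 hApos
  set σ₀ := 1 / Real.sqrt A with hσ₀
  have hσ₀pos : 0 < σ₀ := by positivity
  have hσ₀sq : σ₀ ^ 2 = 1 / A := by
    rw [hσ₀, div_pow, one_pow, Real.sq_sqrt hApos.le]
  have h1 : 1 - σ₀ ^ 2 = (1 + t) ^ 2 / A := by
    rw [hσ₀sq, hA]; field_simp; ring
  clear_value A σ₀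
  have hval : (t + 1) * σ₀ / Real.sqrt (1 - σ₀ ^ 2) = 1 := by
    rw [h1, Real.sqrt_div (by positivity), Real.sqrt_sq (by linarith), hσ₀]
    field_simp
    ring
  by_contra hle
  push_neg at hle
  have hσ₀1 : σ₀ < 1 := by
    -- since f(σ₀)=1 and f(σ)>1 we can also derive, but directly:
    rw [hσ₀, div_lt_one hsA]
    have : (1:ℝ) < A := by nlinarith
    calc (1:ℝ) = Real.sqrt 1 := by simp
    _ < Real.sqrt A := Real.sqrt_lt_sqrt (by norm_num) this
  have hmono := mono_aux hσ0 hle hσ₀1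
  have ht1 : (0:ℝ) < t + 1 := by linarith
  have : (t + 1) * σ / Real.sqrt (1 - σ ^ 2)
      ≤ (t + 1) * σ₀ / Real.sqrt (1 - σ₀ ^ 2) := by
    rw [mul_div_assoc, mul_div_assoc]
    exact mul_le_mul_of_nonneg_left hmono ht1.le
  linarith [hval ▸ this]
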